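/- Let 0 < a < 2 and t > 0, and set λ = −it. Define the boundary-value powers λ₊^p = t^p·e^{−ipπ/2} and λ₋^p = t^p·e^{3ipπ/2} for p ∈ ℝ (corresponding to the two sides of the cut [0, −i∞) for the branch fixed by −π/2 < arg λ < 3π/2). Let η ∈ ℂ satisfy η² = e^{iπa} − 1, let T = [[1/2, −i/2],[1/2, i/2]], and define P₊ = diag(λ₊^{−1/4}, λ₊^{1/4})·T·diag(η^{−1}, η)·diag(λ₊^{a/4}, λ₊^{−a/4}) and P₋ = diag(λ₋^{−1/4}, λ₋^{1/4})·T·diag(η^{−1}, η)·diag(λ₋^{a/4}, λ₋^{−a/4}). Then P₊ = P₋·[[0, ω],[−ω^{−1}, 0]], where ω = 2i·sin(aπ/2)·t^{−a/2}·e^{iaπ/4}. (Thus the global parametrix P^{(gl)}(λ) = λ^{−σ₃/4}·T·η^{−σ₃}·λ^{(a/4)σ₃} satisfies the required jump across the ray Σ₀ = [0, −i∞).) -/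

import Mathlib

/-- The boundary value `λ₊^p = t^p e^{-ipπ/2}` of the power `λ^p` on the cut
`[0, -i∞)` (branch `-π/2 < arg λ < 3π/2`), at `λ = -it`, `t > 0`, from the side
`Re λ > 0`. -/
noncomputable def lamPlus (t p : ℝ) : ℂ :=
  ((t ^ p : ℝ) : ℂ) * Complex.exp (-(Complex.I * (p : ℂ) * (Real.pi : ℂ) / 2))

/-- The boundary value `λ₋^p = t^p e^{3ipπ/2}` from the side `Re λ < 0`. -/
noncomputable def lamMinus (t p : ℝ) : ℂ :=
  ((t ^ p : ℝ) : ℂ) * Complex.exp (3 * Complex.I * (p : ℂ) * (Real.pi : ℂ) / 2)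

/-- The global parametrix `P^{(gl)}(λ) = λ^{-σ₃/4} T η^{-σ₃} λ^{(a/4)σ₃}` satisfies
the jump relation `P₊ = P₋ · [[0, ω], [-ω⁻¹, 0]]` across the ray `Σ₀ = [0, -i∞)`,
where `ω = 2i sin(aπ/2) λ₊^{-a/2}` and `η² = e^{iπa} - 1`. -/
theorem global_parametrix_jump (a : ℝ) (ha : 0 < a) (ha2 : a < 2) (t : ℝ) (ht : 0 < t)
    (eta : ℂ) (heta : eta ^ 2 = Complex.exp (Complex.I * (Real.pi : ℂ) * (a : ℂ)) - 1) :
    Matrix.diagonal ![lamPlus t (-(1 / 4)), lamPlus t (1 / 4)] *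
        (!![1 / 2, -Complex.I / 2; 1 / 2, Complex.I / 2] : Matrix (Fin 2) (Fin 2) ℂ) *
        Matrix.diagonal ![eta⁻¹, eta] *
        Matrix.diagonal ![lamPlus t (a / 4), lamPlus t (-(a / 4))] =
      Matrix.diagonal ![lamMinus t (-(1 / 4)), lamMinus t (1 / 4)] *
          (!![1 / 2, -Complex.I / 2; 1 / 2, Complex.I / 2] : Matrix (Fin 2) (Fin 2) ℂ) *
          Matrix.diagonal ![eta⁻¹, eta] *
          Matrix.diagonal ![lamMinus t (a / 4), lamMinus t (-(a / 4))] *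
        !![0, 2 * Complex.I * (Real.sin (a * Real.pi / 2) : ℂ) *
              ((t ^ (-(a / 2)) : ℝ) : ℂ) *
              Complex.exp (Complex.I * (a : ℂ) * (Real.pi : ℂ) / 4);
           -(2 * Complex.I * (Real.sin (a * Real.pi / 2) : ℂ) *
              ((t ^ (-(a / 2)) : ℝ) : ℂ) *
              Complex.exp (Complex.I * (a : ℂ) * (Real.pi : ℂ) / 4))⁻¹, 0] := by
  have hI := Complex.I_ne_zero
  set u : ℂ := Complex.exp (Complex.I * (Real.pi:ℂ) * (a:ℂ) / 8) with hu_def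
  set v : ℂ := Complex.exp (Complex.I * (Real.pi:ℂ) / 8) with hv_def
  set X : ℂ := ((t ^ (a/4) : ℝ) : ℂ) with hX_def
  set Y : ℂ := ((t ^ ((1:ℝ)/4) : ℝ) : ℂ) with hY_def
  have hu : u ≠ 0 := Complex.exp_ne_zero _
  have hv : v ≠ 0 := Complex.exp_ne_zero _
  have hX : X ≠ 0 := by
    rw [hX_def, Complex.ofReal_ne_zero]
    positivity
  have hY : Y ≠ 0 := by
    rw [hY_def, Complex.ofReal_ne_zero]
    positivity
  have hexp : ∀ c d : ℂ, c = d → Complex.exp c = Complex.exp d := fun c d h => by rw [h]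
  have h1 : lamPlus t (-(1/4)) = Y⁻¹ * v := by
    rw [lamPlus, show (-(1/4) : ℝ) = -(1/4 : ℝ) by norm_num, Real.rpow_neg ht.le,
      Complex.ofReal_inv, hY_def, hv_def]
    congr 1
    apply hexp; push_cast; ring
  have h2 : lamPlus t (1/4) = Y * v⁻¹ := by
    rw [lamPlus, hY_def, hv_def, ← Complex.exp_neg]
    congr 1
    apply hexp; push_cast; ring
  have hpi : Complex.exp (Complex.I * (Real.pi:ℂ) / 2) = Complex.I := by
    rw [show Complex.I * (Real.pi:ℂ) / 2 = ((Real.pi/2 : ℝ):ℂ) * Complex.I by push_cast; ring,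
      Complex.exp_mul_I, ← Complex.ofReal_cos, ← Complex.ofReal_sin,
      Real.cos_pi_div_two, Real.sin_pi_div_two]
    simp
  have hmi : Complex.exp (-(Complex.I * (Real.pi:ℂ) / 2)) = -Complex.I := by
    rw [Complex.exp_neg, hpi, Complex.inv_I]
  have h3 : lamMinus t (-(1/4)) = -Complex.I * (Y⁻¹ * v) := by
    have e : (-Complex.I) * (Y⁻¹ * v) = Y⁻¹ * (Complex.exp (-(Complex.I*(Real.pi:ℂ)/2)) * v) := by
      rw [hmi]; ring
    rw [e, hv_def, ← Complex.exp_add, lamMinus, Real.rpow_neg ht.le, Complex.ofReal_inv, hY_def]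
    congr 1
    apply hexp; push_cast; ring
  have h4 : lamMinus t (1/4) = Complex.I * (Y * v⁻¹) := by
    have e : Complex.I * (Y * v⁻¹) = Y * (Complex.exp (Complex.I*(Real.pi:ℂ)/2) * v⁻¹) := by
      rw [hpi]; ring
    rw [e, hv_def, ← Complex.exp_neg, ← Complex.exp_add, lamMinus, hY_def]
    congr 1
    apply hexp; push_cast; ring
  have h5 : lamPlus t (a/4) = X * u⁻¹ := by
    rw [lamPlus, hX_def, hu_def, ← Complex.exp_neg]
    congr 1
    apply hexp; push_cast; ring
  have h6 : lamPlus t (-(a/4)) = X⁻¹ * u := by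
    rw [lamPlus, Real.rpow_neg ht.le, Complex.ofReal_inv, hX_def, hu_def]
    congr 1
    apply hexp; push_cast; ring
  have h7 : lamMinus t (a/4) = X * u^3 := by
    rw [lamMinus, hX_def, hu_def, ← Complex.exp_nat_mul]
    congr 1
    apply hexp; push_cast; ring
  have h8 : lamMinus t (-(a/4)) = X⁻¹ * u⁻¹^3 := by
    rw [inv_pow, lamMinus, Real.rpow_neg ht.le, Complex.ofReal_inv, hX_def, hu_def,
      ← Complex.exp_nat_mul, ← Complex.exp_neg]
    congr 1
    apply hexp; push_cast; ring
  have h9 : ((t ^ (-(a/2)) : ℝ) : ℂ) = (X * X)⁻¹ := by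
    rw [hX_def, ← Complex.ofReal_mul, ← Real.rpow_add ht, ← Complex.ofReal_inv,
      ← Real.rpow_neg ht.le]
    ring_nf
  have h10 : Complex.exp (Complex.I * (a:ℂ) * (Real.pi:ℂ) / 4) = u^2 := by
    rw [hu_def, ← Complex.exp_nat_mul]
    apply hexp; push_cast; ring
  have h12 : ((Real.sin (a * Real.pi / 2) : ℝ) : ℂ) = (u^4 - (u^4)⁻¹) / (2 * Complex.I) := by
    rw [Complex.ofReal_sin, show ((a * Real.pi / 2 : ℝ) : ℂ) = (a:ℂ) * (Real.pi:ℂ) / 2 by push_cast; ring]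
    rw [Complex.sin, hu_def, ← Complex.exp_nat_mul, ← Complex.exp_neg]
    rw [show ((a:ℂ) * (Real.pi:ℂ) / 2 * Complex.I) = (4:ℕ) * (Complex.I * (Real.pi:ℂ) * (a:ℂ) / 8) by push_cast; ring,
      show (-((a:ℂ) * (Real.pi:ℂ) / 2) * Complex.I) = -(((4:ℕ):ℂ) * (Complex.I * (Real.pi:ℂ) * (a:ℂ) / 8)) by push_cast; ring]
    rw [eq_div_iff (by simp [Complex.I_ne_zero] : (2*Complex.I:ℂ) ≠ 0)]
    linear_combination (Complex.exp (-(((4:ℕ):ℂ) * (Complex.I * (Real.pi:ℂ) * (a:ℂ) / 8))) -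
      Complex.exp (((4:ℕ):ℂ) * (Complex.I * (Real.pi:ℂ) * (a:ℂ) / 8))) * Complex.I_sq
  have heta' : eta ^ 2 = u^8 - 1 := by
    rw [heta, hu_def, ← Complex.exp_nat_mul]
    congr 2
    push_cast; ring
  have heta0 : eta ≠ 0 := by
    intro h
    rw [h] at heta'
    have : u ^ 8 = 1 := by linear_combination -heta'
    rw [hu_def, ← Complex.exp_nat_mul] at this
    rw [Complex.exp_eq_one_iff] at this
    obtain ⟨n, hn⟩ := this
    rw [show ((8:ℕ) * (Complex.I * (Real.pi:ℂ) * (a:ℂ) / 8)) = ((a : ℂ)) * (Real.pi * Complex.I) by push_cast; ring,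
      show ((n:ℂ) * (2 * Real.pi * Complex.I)) = ((2*n : ℤ) : ℂ) * (Real.pi * Complex.I) by push_cast; ring] at hn
    have hπI : ((Real.pi : ℂ) * Complex.I) ≠ 0 := by
      simp [Real.pi_ne_zero, Complex.I_ne_zero]
    have ha' : (a : ℂ) = ((2*n : ℤ) : ℂ) := mul_right_cancel₀ hπI hn
    have : a = ((2*n : ℤ) : ℝ) := by exact_mod_cast ha'
    rw [this] at ha ha2
    have : (0:ℤ) < 2*n := by exact_mod_cast ha
    have : (2*n:ℤ) < 2 := by exact_mod_cast ha2
    omega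
  have hsin0 : Real.sin (a * Real.pi / 2) ≠ 0 := by
    have hs1 : 0 < a * Real.pi / 2 := by positivity
    have hs2 : a * Real.pi / 2 < Real.pi := by nlinarith [Real.pi_pos]
    exact ne_of_gt (Real.sin_pos_of_pos_of_lt_pi hs1 hs2)
  have hu4 : u^4 - (u^4)⁻¹ ≠ 0 := by
    intro h
    apply hsin0
    have h0 : ((Real.sin (a * Real.pi / 2) : ℝ) : ℂ) = 0 := by rw [h12, h]; simp
    exact_mod_cast h0
  clear_value u v X Y
  have homega : 2 * Complex.I * ((Real.sin (a * Real.pi / 2) : ℝ) : ℂ) *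
      ((t ^ (-(a / 2)) : ℝ) : ℂ) * Complex.exp (Complex.I * (a : ℂ) * (Real.pi : ℂ) / 4) =
      eta ^ 2 * u⁻¹ ^ 2 * X⁻¹ ^ 2 := by
    rw [h12, h9, h10, heta']
    field_simp
  have hominv : (eta ^ 2 * u⁻¹ ^ 2 * X⁻¹ ^ 2 : ℂ)⁻¹ = eta⁻¹ ^ 2 * u ^ 2 * X ^ 2 := by
    simp [mul_inv, inv_pow, inv_inv]
    ring
  rw [h1, h2, h3, h4, h5, h6, h7, h8, homega, hominv]
  have hdiag : ∀ x y : ℂ, Matrix.diagonal ![x, y] = !![x, 0; 0, y] := fun x y => by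
    ext i j; fin_cases i <;> fin_cases j <;> simp [Matrix.diagonal]
  simp only [hdiag]
  simp only [Matrix.mul_fin_two]
  rw [← Matrix.ext_iff]
  simp only [Fin.forall_fin_two, Matrix.of_apply, Matrix.cons_val', Matrix.cons_val_zero,
    Matrix.cons_val_one, Matrix.head_cons, Matrix.head_fin_const, Matrix.empty_val',
    Matrix.cons_val_fin_one]
  generalize hU0 : u⁻¹ = U
  generalize hX0 : X⁻¹ = Xi
  generalize hY0 : Y⁻¹ = Yi
  generalize hv0 : v⁻¹ = Vi
  generalize hE0 : eta⁻¹ = E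
  have hUr : u * U = 1 := by rw [← hU0]; exact mul_inv_cancel₀ hu
  have hXr : X * Xi = 1 := by rw [← hX0]; exact mul_inv_cancel₀ hX
  have hEr : eta * E = 1 := by rw [← hE0]; exact mul_inv_cancel₀ heta0
  have hI2 : Complex.I ^ 2 = -1 := Complex.I_sq
  refine ⟨⟨?_, ?_⟩, ?_, ?_⟩
  · linear_combination (-(1/2:ℂ) * Yi * v * E * X * U * (u*U+1)) * hUr +
      (-(1/2:ℂ)*Yi*v*E*U^3*u^2*X) * hXr + (-(1/2:ℂ)*Yi*v*E*Xi*U^3*u^2*X^2) * hEr +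
      ((1/2:ℂ)*Yi*v*eta*Xi*U^3*E^2*u^2*X^2) * hI2
  · linear_combination ((Complex.I/2)*Yi*v*eta*Xi*u*(u*U+1)) * hUr +
      ((Complex.I/2)*Yi*v*eta*u^3*U^2*Xi) * hXr + ((Complex.I/2)*Yi*v*eta*X*u^3*U^2*Xi^2) * hEr
  · linear_combination (-(1/2:ℂ) * Y * Vi * E * X * U * (u*U+1)) * hUr +
      (-(1/2:ℂ)*Y*Vi*E*U^3*u^2*X) * hXr + (-(1/2:ℂ)*Y*Vi*E*Xi*U^3*u^2*X^2) * hEr +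
      ((1/2:ℂ)*Y*Vi*eta*Xi*U^3*E^2*u^2*X^2) * hI2
  · linear_combination (-(Complex.I/2)*Y*Vi*eta*Xi*u*(u*U+1)) * hUr +
      (-(Complex.I/2)*Y*Vi*eta*u^3*U^2*Xi) * hXr + (-(Complex.I/2)*Y*Vi*eta*X*u^3*U^2*Xi^2) * hEr
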